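/- Let (U, 𝔘) be a measurable space and ν a σ-finite measure on U. Let M > 0, κ > 0, and let ψ : ℝ → ℝ be even and twice continuously differentiable with ψ''(t) ≥ 0 and |t|·ψ''(t) ≤ M for all t ∈ ℝ. Let σ : ℝ → ℝ and c : ℝ × U → ℝ be such that u ↦ c(x,u) is measurable for each x, the map x ↦ x + c(x,u) is nondecreasing for every u ∈ U, and (σ(x) − σ(z))² + ∫_U (c(x,u) − c(z,u))² ν(du) ≤ κ·|x − z| for all x, z ∈ ℝ. Then for all x ≠ z the integrand u ↦ ψ(x−z+c(x,u)−c(z,u)) − ψ(x−z) − ψ'(x−z)·(c(x,u)−c(z,u)) is nonnegative and (1/2)·ψ''(x−z)·(σ(x)−σ(z))² + ∫_U [ψ(x−z+c(x,u)−c(z,u)) − ψ(x−z) − ψ'(x−z)·(c(x,u)−c(z,u))] ν(du) ≤ (3/2)·M·κ. -/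

import Mathlib

open MeasureTheory

theorem stmt_4 {U : Type*} [MeasurableSpace U] (ν : Measure U) [SigmaFinite ν]
    (M κ : ℝ) (hM : 0 < M) (hκ : 0 < κ)
    (ψ : ℝ → ℝ) (heven : ∀ t : ℝ, ψ (-t) = ψ t) (hψ : ContDiff ℝ 2 ψ)
    (hconv : ∀ t : ℝ, 0 ≤ deriv (deriv ψ) t)
    (hbd : ∀ t : ℝ, |t| * deriv (deriv ψ) t ≤ M)
    (σ : ℝ → ℝ) (c : ℝ → U → ℝ)
    (hmeas : ∀ x : ℝ, Measurable (c x))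
    (hmono : ∀ u : U, Monotone fun x : ℝ => x + c x u)
    (hcont : ∀ x z : ℝ,
      ENNReal.ofReal ((σ x - σ z) ^ 2) +
        (∫⁻ u, ENNReal.ofReal ((c x u - c z u) ^ 2) ∂ν) ≤
        ENNReal.ofReal (κ * |x - z|)) :
    ∀ x z : ℝ, x ≠ z →
      (∀ u : U, 0 ≤ ψ (x - z + c x u - c z u) - ψ (x - z) -
        deriv ψ (x - z) * (c x u - c z u)) ∧
      ENNReal.ofReal ((1 / 2) * deriv (deriv ψ) (x - z) * (σ x - σ z) ^ 2) +
        (∫⁻ u, ENNReal.ofReal (ψ (x - z + c x u - c z u) - ψ (x - z) -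
          deriv ψ (x - z) * (c x u - c z u)) ∂ν) ≤
        ENNReal.ofReal ((3 / 2) * M * κ) := by
  -- basic differentiability facts
  have hψ1 : ContDiff ℝ 1 (deriv ψ) :=
    (contDiff_succ_iff_deriv.mp (show ContDiff ℝ ((1:WithTop ℕ∞)+1) ψ by exact_mod_cast hψ)).2.2
  have hd1 : ∀ t : ℝ, HasDerivAt ψ (deriv ψ t) t := fun t =>
    ((hψ.differentiable two_ne_zero) t).hasDerivAt
  have hd2 : ∀ t : ℝ, HasDerivAt (deriv ψ) (deriv (deriv ψ) t) t := fun t =>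
    ((hψ1.differentiable one_ne_zero) t).hasDerivAt
  have hc2 : Continuous (deriv (deriv ψ)) :=
    (contDiff_succ_iff_deriv.mp
      (show ContDiff ℝ ((0:WithTop ℕ∞)+1) (deriv ψ) by exact_mod_cast hψ1)).2.2.continuous
  -- Taylor representation with integral remainder
  have hrep : ∀ a b : ℝ, ψ b - ψ a - deriv ψ a * (b - a) =
      ∫ s in a..b, (b - s) * deriv (deriv ψ) s := by
    intro a b
    have hF : ∀ s ∈ Set.uIcc a b, HasDerivAt (fun s => (b - s) * deriv ψ s + ψ s)
        ((b - s) * deriv (deriv ψ) s) s := by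
      intro s _
      have h1 : HasDerivAt (fun s : ℝ => b - s) (-1) s := by
        simpa using (hasDerivAt_id s).const_sub b
      have h2 := (h1.mul (hd2 s)).add (hd1 s)
      exact h2.congr_deriv (by ring)
    have hInt : IntervalIntegrable (fun s => (b - s) * deriv (deriv ψ) s) volume a b :=
      ((continuous_const.sub continuous_id).mul hc2).intervalIntegrable a b
    have := intervalIntegral.integral_eq_sub_of_hasDerivAt hF hInt
    rw [this]
    ring
  -- nonnegativity (convexity)
  have hnn : ∀ a b : ℝ, 0 ≤ ψ b - ψ a - deriv ψ a * (b - a) := by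
    intro a b
    rw [hrep a b]
    rcases le_total a b with hab | hba
    · exact intervalIntegral.integral_nonneg hab fun s hs =>
        mul_nonneg (by linarith [hs.2]) (hconv s)
    · rw [intervalIntegral.integral_symm, ← intervalIntegral.integral_neg]
      exact intervalIntegral.integral_nonneg hba fun s hs => by
        have := hconv s
        have : (b - s) * deriv (deriv ψ) s ≤ 0 :=
          mul_nonpos_of_nonpos_of_nonneg (by linarith [hs.1]) (hconv s)
        linarith
  -- upper bound, positive side
  have hub_pos : ∀ a b : ℝ, 0 < a → 0 ≤ b →
      ψ b - ψ a - deriv ψ a * (b - a) ≤ M / a * (b - a) ^ 2 := by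
    intro a b ha hb0
    rw [hrep a b]
    have key : ∀ s ∈ Set.uIoc a b, ‖(b - s) * deriv (deriv ψ) s‖ ≤ M / a * |b - a| := by
      intro s hs
      have hsmem := hs
      rw [Set.mem_uIoc] at hsmem
      have hs0 : 0 < s := by
        rcases hsmem with ⟨h1, _⟩ | ⟨h1, _⟩ <;> linarith
      have hsM : s * deriv (deriv ψ) s ≤ M := by
        have := hbd s; rwa [abs_of_pos hs0] at this
      have hψs := hconv s
      rw [Real.norm_eq_abs, abs_mul, abs_of_nonneg hψs]
      rw [div_mul_eq_mul_div, le_div_iff₀ ha]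
      rcases hsmem with ⟨h1, h2⟩ | ⟨h1, h2⟩
      · -- a < s ≤ b
        rw [abs_of_nonneg (by linarith : (0:ℝ) ≤ b - s), abs_of_nonneg (by linarith : (0:ℝ) ≤ b - a)]
        nlinarith [mul_le_mul_of_nonneg_left hsM (by linarith : (0:ℝ) ≤ b - s),
          mul_nonneg (mul_nonneg (by linarith : (0:ℝ) ≤ s - a) (by linarith : (0:ℝ) ≤ b - s)) hψs,
          mul_nonneg hM.le (by linarith : (0:ℝ) ≤ s - a)]
      · -- b < s ≤ a
        rw [abs_of_nonpos (by linarith : b - s ≤ 0), abs_of_nonpos (by linarith : b - a ≤ 0)]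
        nlinarith [mul_le_mul_of_nonneg_left hsM (by linarith : (0:ℝ) ≤ a - b),
          mul_nonneg (mul_nonneg hb0 (by linarith : (0:ℝ) ≤ a - s)) hψs]
    have hnorm := intervalIntegral.norm_integral_le_of_norm_le_const key
    calc (∫ s in a..b, (b - s) * deriv (deriv ψ) s)
        ≤ |∫ s in a..b, (b - s) * deriv (deriv ψ) s| := le_abs_self _
      _ ≤ M / a * |b - a| * |b - a| := by rwa [Real.norm_eq_abs] at hnorm
      _ = M / a * (b - a) ^ 2 := by rw [mul_assoc, ← sq, sq_abs]
  -- odd first derivative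
  have hψodd : ∀ t : ℝ, deriv ψ (-t) = -deriv ψ t := by
    intro t
    have h0 : (fun t : ℝ => ψ (-t)) = ψ := funext heven
    have := deriv_comp_neg ψ t
    rw [h0] at this
    linarith
  -- upper bound, both signs
  have hub : ∀ a h : ℝ, ((0 < a ∧ 0 ≤ a + h) ∨ (a < 0 ∧ a + h ≤ 0)) →
      ψ (a + h) - ψ a - deriv ψ a * h ≤ M / |a| * h ^ 2 := by
    intro a h hc
    rcases hc with ⟨ha, hb⟩ | ⟨ha, hb⟩
    · have := hub_pos a (a + h) ha hb
      rw [add_sub_cancel_left] at this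
      rwa [abs_of_pos ha]
    · have := hub_pos (-a) (-a + -h) (by linarith) (by linarith)
      have he1 : ψ (-a + -h) = ψ (a + h) := by
        rw [show -a + -h = -(a + h) by ring, heven]
      have he2 : ψ (-a) = ψ a := heven a
      have he3 : deriv ψ (-a) = -deriv ψ a := hψodd a
      rw [he1, he2, he3] at this
      rw [abs_of_neg ha]
      calc ψ (a + h) - ψ a - deriv ψ a * h
          = ψ (a + h) - ψ a - (-deriv ψ a) * (-a + -h - -a) := by ring
        _ ≤ M / (-a) * (-a + -h - -a) ^ 2 := this
        _ = M / (-a) * h ^ 2 := by ring_nf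
  intro x z hxz
  have ha : x - z ≠ 0 := sub_ne_zero.mpr hxz
  refine ⟨fun u => ?_, ?_⟩
  · have := hnn (x - z) (x - z + c x u - c z u)
    have hb : (x - z + c x u - c z u) - (x - z) = c x u - c z u := by ring
    rwa [hb] at this
  · have hcase : ∀ u, (0 < x - z ∧ 0 ≤ (x - z) + (c x u - c z u)) ∨
        (x - z < 0 ∧ (x - z) + (c x u - c z u) ≤ 0) := by
      intro u
      rcases lt_or_gt_of_ne hxz with hlt | hgt
      · right
        refine ⟨by linarith, ?_⟩
        have := hmono u (le_of_lt hlt)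
        simp only at this
        linarith
      · left
        refine ⟨by linarith, ?_⟩
        have := hmono u (le_of_lt hgt)
        simp only at this
        linarith
    have hR : ∀ u, ψ (x - z + c x u - c z u) - ψ (x - z) -
        deriv ψ (x - z) * (c x u - c z u) ≤ M / |x - z| * (c x u - c z u) ^ 2 := by
      intro u
      have he : x - z + c x u - c z u = (x - z) + (c x u - c z u) := by ring
      rw [he]
      exact hub (x - z) (c x u - c z u) (hcase u)
    have hψ2a : deriv (deriv ψ) (x - z) ≤ M / |x - z| := by
      rw [le_div_iff₀ (abs_pos.mpr ha)]
      have := hbd (x - z)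
      linarith [mul_comm |x - z| (deriv (deriv ψ) (x - z))]
    have hσ : (1 / 2) * deriv (deriv ψ) (x - z) * (σ x - σ z) ^ 2 ≤
        M / |x - z| * (σ x - σ z) ^ 2 := by
      have h1 := hconv (x - z)
      nlinarith [sq_nonneg (σ x - σ z)]
    have hMa : 0 ≤ M / |x - z| := div_nonneg hM.le (abs_nonneg _)
    have hmeas2 : Measurable fun u => ENNReal.ofReal ((c x u - c z u) ^ 2) :=
      ENNReal.measurable_ofReal.comp (((hmeas x).sub (hmeas z)).pow_const 2)
    calc ENNReal.ofReal ((1 / 2) * deriv (deriv ψ) (x - z) * (σ x - σ z) ^ 2) +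
          (∫⁻ u, ENNReal.ofReal (ψ (x - z + c x u - c z u) - ψ (x - z) -
            deriv ψ (x - z) * (c x u - c z u)) ∂ν)
        ≤ ENNReal.ofReal (M / |x - z| * (σ x - σ z) ^ 2) +
          (∫⁻ u, ENNReal.ofReal (M / |x - z| * (c x u - c z u) ^ 2) ∂ν) :=
        add_le_add (ENNReal.ofReal_le_ofReal hσ)
          (lintegral_mono fun u => ENNReal.ofReal_le_ofReal (hR u))
      _ = ENNReal.ofReal (M / |x - z|) * ENNReal.ofReal ((σ x - σ z) ^ 2) +
          ENNReal.ofReal (M / |x - z|) * (∫⁻ u, ENNReal.ofReal ((c x u - c z u) ^ 2) ∂ν) := by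
          rw [ENNReal.ofReal_mul hMa]
          congr 1
          simp_rw [ENNReal.ofReal_mul hMa]
          exact lintegral_const_mul _ hmeas2
      _ = ENNReal.ofReal (M / |x - z|) * (ENNReal.ofReal ((σ x - σ z) ^ 2) +
          (∫⁻ u, ENNReal.ofReal ((c x u - c z u) ^ 2) ∂ν)) := by rw [mul_add]
      _ ≤ ENNReal.ofReal (M / |x - z|) * ENNReal.ofReal (κ * |x - z|) :=
          mul_le_mul_right (hcont x z) _
      _ = ENNReal.ofReal (M / |x - z| * (κ * |x - z|)) := (ENNReal.ofReal_mul hMa).symm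
      _ ≤ ENNReal.ofReal ((3 / 2) * M * κ) := by
          apply ENNReal.ofReal_le_ofReal
          have habs : |x - z| ≠ 0 := abs_ne_zero.mpr ha
          have heq : M / |x - z| * (κ * |x - z|) = M * κ := by
            field_simp
          rw [heq]
          nlinarith [mul_pos hM hκ]
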